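/- Let Z ~ N(0,1) and let c > 0, n ∈ ℕ, ζ_n > 0 satisfy: log(1+ζ_n) ≥ ζ_n/2, √(n/c)·ζ_n ≥ √(c/n), √n·ζ_n/(2√c) ≥ √(2/π), and n·ζ_n²/log n ≥ 16c. Then P(|exp(√(c/n)·Z − c/(2n)) − 1| > ζ_n) ≤ 1/n². -/

import Mathlib

open MeasureTheory ProbabilityTheory Real

open Filter Set

lemma my_hasDeriv (x : ℝ) : HasDerivAt (fun y : ℝ => -Real.exp (-y^2/2))
    (x * Real.exp (-x^2/2)) x := by
  have h1 : HasDerivAt (fun y : ℝ => -y^2/2) (-x) x := by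
    have := ((hasDerivAt_pow 2 x).neg).div_const 2
    refine this.congr_deriv ?_
    push_cast
    ring
  have h2 := (h1.exp).neg
  refine h2.congr_deriv ?_
  ring

lemma my_tendsto : Tendsto (fun y : ℝ => -Real.exp (-y^2/2)) atTop (nhds 0) := by
  have h1 : Tendsto (fun y : ℝ => -y^2/2) atTop atBot := by
    have h : Tendsto (fun y : ℝ => y^2) atTop atTop := tendsto_pow_atTop two_ne_zero
    have h2 : Tendsto (fun y : ℝ => -y^2) atTop atBot := tendsto_neg_atBot_iff.mpr h
    exact h2.atBot_div_const two_pos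
  have h2 : Tendsto (fun y : ℝ => Real.exp (-y^2/2)) atTop (nhds 0) :=
    Real.tendsto_exp_atBot.comp h1
  simpa using h2.neg

lemma my_integrableOn {t : ℝ} (ht : 0 < t) :
    IntegrableOn (fun x : ℝ => x * Real.exp (-x^2/2)) (Set.Ioi t) := by
  refine integrableOn_Ioi_deriv_of_nonneg' (fun x _ => my_hasDeriv x) ?_ my_tendsto
  intro x hx
  have : 0 < x := ht.trans hx
  positivity

lemma my_integral {t : ℝ} (ht : 0 < t) :
    ∫ x in Set.Ioi t, x * Real.exp (-x^2/2) = Real.exp (-t^2/2) := by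
  rw [integral_Ioi_of_hasDerivAt_of_nonneg' (fun x _ => my_hasDeriv x)
    (fun x hx => by have : 0 < x := ht.trans hx; positivity) my_tendsto]
  simp

lemma gauss_pdf_eq (x : ℝ) :
    gaussianPDFReal 0 1 x = (Real.sqrt (2*Real.pi))⁻¹ * Real.exp (-x^2/2) := by
  simp [gaussianPDFReal]

lemma gauss_tail {t : ℝ} (ht : 0 < t) :
    (gaussianReal 0 1) {x : ℝ | t < x}
      ≤ ENNReal.ofReal ((Real.sqrt (2*Real.pi) * t)⁻¹ * Real.exp (-t^2/2)) := by
  have hset : {x : ℝ | t < x} = Set.Ioi t := rfl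
  rw [hset, gaussianReal_apply_eq_integral 0 one_ne_zero]
  apply ENNReal.ofReal_le_ofReal
  have key : ∫ x in Set.Ioi t, gaussianPDFReal 0 1 x
      ≤ ∫ x in Set.Ioi t, (Real.sqrt (2*Real.pi))⁻¹ * t⁻¹ * (x * Real.exp (-x^2/2)) := by
    refine setIntegral_mono_on (integrable_gaussianPDFReal 0 1).integrableOn
      ((my_integrableOn ht).const_mul _) measurableSet_Ioi ?_
    intro x hx
    rw [gauss_pdf_eq]
    have hx1 : 1 ≤ x / t := (one_le_div ht).mpr (le_of_lt hx)
    have hE : (0:ℝ) < Real.exp (-x^2/2) := Real.exp_pos _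
    have hs : (0:ℝ) ≤ (Real.sqrt (2*Real.pi))⁻¹ := by positivity
    calc (Real.sqrt (2*Real.pi))⁻¹ * Real.exp (-x^2/2)
        = (Real.sqrt (2*Real.pi))⁻¹ * (1 * Real.exp (-x^2/2)) := by ring
      _ ≤ (Real.sqrt (2*Real.pi))⁻¹ * ((x/t) * Real.exp (-x^2/2)) := by gcongr
      _ = (Real.sqrt (2*Real.pi))⁻¹ * t⁻¹ * (x * Real.exp (-x^2/2)) := by ring
  calc ∫ x in Set.Ioi t, gaussianPDFReal 0 1 x
      ≤ ∫ x in Set.Ioi t, (Real.sqrt (2*Real.pi))⁻¹ * t⁻¹ * (x * Real.exp (-x^2/2)) := key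
    _ = (Real.sqrt (2*Real.pi))⁻¹ * t⁻¹ * ∫ x in Set.Ioi t, x * Real.exp (-x^2/2) :=
        integral_const_mul _ _
    _ = (Real.sqrt (2*Real.pi) * t)⁻¹ * Real.exp (-t^2/2) := by
        rw [my_integral ht, mul_inv]

lemma gauss_tail_neg {t : ℝ} :
    (gaussianReal 0 1) {x : ℝ | x < -t} = (gaussianReal 0 1) {x : ℝ | t < x} := by
  have hmap := gaussianReal_map_const_mul (μ := 0) (v := 1) (-1)
  have h1 : ∀ h, (NNReal.mk ((-1:ℝ)^2) h) * 1 = 1 := fun _ => by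
    ext; norm_num
  rw [mul_zero, h1] at hmap
  conv_lhs => rw [← hmap]
  rw [Measure.map_apply (measurable_id'.const_mul (-1)) (by
    have : {x : ℝ | x < -t} = Set.Iio (-t) := rfl
    rw [this]; exact measurableSet_Iio)]
  congr 1
  ext x
  simp only [Set.mem_preimage, Set.mem_setOf_eq]
  constructor
  · intro h; linarith
  · intro h; linarith

theorem stmt7 {Ω : Type*} {mΩ : MeasurableSpace Ω} (μ : Measure Ω) [IsProbabilityMeasure μ]
    (Z : Ω → ℝ) (hZ : Measure.map Z μ = gaussianReal 0 1)
    (c : ℝ) (hc : 0 < c) (n : ℕ) (hn : 0 < n) (ζ : ℝ) (hζ : 0 < ζ)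
    (h1 : ζ / 2 ≤ Real.log (1 + ζ))
    (h2 : Real.sqrt (c / n) ≤ Real.sqrt (n / c) * ζ)
    (h3 : Real.sqrt (2 / Real.pi) ≤ Real.sqrt n * ζ / (2 * Real.sqrt c))
    (h4 : 16 * c ≤ n * ζ^2 / Real.log n) :
    μ {ω | ζ < |Real.exp (Real.sqrt (c / n) * Z ω - c / (2 * n)) - 1|}
      ≤ ENNReal.ofReal (1 / n^2) := by
  have hn' : (0:ℝ) < n := Nat.cast_pos.mpr hn
  set a := Real.sqrt (c / n) with ha_def
  set t := Real.sqrt n * ζ / (2 * Real.sqrt c) with ht_def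
  have hsn : (0:ℝ) < Real.sqrt n := Real.sqrt_pos.mpr hn'
  have hsc : (0:ℝ) < Real.sqrt c := Real.sqrt_pos.mpr hc
  have ha : 0 < a := Real.sqrt_pos.mpr (div_pos hc hn')
  have ht : 0 < t := by positivity
  have hat : a * t = ζ / 2 := by
    rw [ha_def, ht_def, Real.sqrt_div hc.le]
    field_simp
  -- c / n ≤ ζ
  have hcn : c / n ≤ ζ := by
    calc c / n = Real.sqrt (c/n) * Real.sqrt (c/n) :=
          (Real.mul_self_sqrt (by positivity)).symm
      _ ≤ Real.sqrt (c/n) * (Real.sqrt (n/c) * ζ) := by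
          exact mul_le_mul_of_nonneg_left h2 (Real.sqrt_nonneg _)
      _ = (Real.sqrt (c/n) * Real.sqrt (n/c)) * ζ := by ring
      _ = ζ := by
          rw [← Real.sqrt_mul (by positivity), show (c/n)*((n:ℝ)/c) = 1 by
            field_simp]
          simp
  -- event inclusion
  have hsub : {ω | ζ < |Real.exp (a * Z ω - c / (2 * n)) - 1|}
      ⊆ Z ⁻¹' ({x : ℝ | t < x} ∪ {x : ℝ | x < -t}) := by
    intro ω hω
    simp only [Set.mem_setOf_eq] at hω
    simp only [Set.mem_preimage, Set.mem_union, Set.mem_setOf_eq]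
    have hb : 0 < c / (2 * (n:ℝ)) := by positivity
    rcases lt_abs.mp hω with h | h
    · left
      have hE : 1 + ζ < Real.exp (a * Z ω - c / (2 * n)) := by linarith
      have hlog := Real.log_lt_log (by positivity) hE
      rw [Real.log_exp] at hlog
      have : a * t < a * Z ω := by rw [hat]; linarith
      exact (mul_lt_mul_iff_right₀ ha).mp this
    · right
      have hE : Real.exp (a * Z ω - c / (2 * n)) < 1 - ζ := by linarith
      have hEpos := Real.exp_pos (a * Z ω - c / (2 * n))
      have h1ζ : 0 < 1 - ζ := lt_trans hEpos hE
      have hlog := Real.log_lt_log hEpos hE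
      rw [Real.log_exp] at hlog
      have hlog2 : Real.log (1 - ζ) ≤ -ζ := by
        have := Real.log_le_sub_one_of_pos h1ζ
        linarith
      have hb2 : c / (2 * (n:ℝ)) ≤ ζ / 2 := by
        rw [show c / (2*(n:ℝ)) = (c/n)/2 by ring]
        linarith
      have : a * Z ω < a * (-t) := by
        have : a * (-t) = -(ζ/2) := by rw [mul_neg, hat]
        rw [this]; linarith
      exact (mul_lt_mul_iff_right₀ ha).mp this
  -- measurability
  have hZm : AEMeasurable Z μ := by
    apply aemeasurable_of_map_neZero
    rw [hZ]
    infer_instance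
  have hmeas : MeasurableSet ({x : ℝ | t < x} ∪ {x : ℝ | x < -t}) := by
    have e1 : {x : ℝ | t < x} = Set.Ioi t := rfl
    have e2 : {x : ℝ | x < -t} = Set.Iio (-t) := rfl
    rw [e1, e2]
    exact measurableSet_Ioi.union measurableSet_Iio
  -- numeric bound
  set A := (Real.sqrt (2*Real.pi) * t)⁻¹ * Real.exp (-t^2/2) with hA_def
  have hApos : 0 ≤ A := by positivity
  have hfinal : A + A ≤ 1 / (n:ℝ)^2 := by
    have hinv : (Real.sqrt (2*Real.pi) * t)⁻¹ ≤ 1/2 := by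
      have h2pi : Real.sqrt (2*Real.pi) * Real.sqrt (2/Real.pi) = 2 := by
        rw [← Real.sqrt_mul (by positivity), show (2*Real.pi)*(2/Real.pi) = 4 by
          field_simp; ring, show (4:ℝ) = 2^2 by norm_num, Real.sqrt_sq (by norm_num)]
      have : 2 ≤ Real.sqrt (2*Real.pi) * t := by
        calc (2:ℝ) = Real.sqrt (2*Real.pi) * Real.sqrt (2/Real.pi) := h2pi.symm
          _ ≤ Real.sqrt (2*Real.pi) * t := by
              exact mul_le_mul_of_nonneg_left h3 (Real.sqrt_nonneg _)
      rw [inv_le_comm₀ (by linarith) (by norm_num)]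
      linarith
    have hn2 : (2:ℕ) ≤ n := by
      by_contra hcon
      interval_cases n
      · simp at h4; linarith
    have hlogn : 0 < Real.log n := Real.log_pos (by exact_mod_cast hn2)
    have h4' : 16 * c * Real.log n ≤ n * ζ^2 := (le_div_iff₀ hlogn).mp h4
    have ht2 : t^2 = n * ζ^2 / (4*c) := by
      rw [ht_def, div_pow, mul_pow, mul_pow, Real.sq_sqrt hn'.le, Real.sq_sqrt hc.le]
      norm_num
    have hexp : Real.exp (-t^2/2) ≤ 1 / (n:ℝ)^2 := by
      have he1 : -t^2/2 ≤ -(2*Real.log n) := by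
        have h8 : 2 * Real.log n ≤ (↑n*ζ^2/(4*c))/2 := by
          rw [div_div, le_div_iff₀ (by positivity : (0:ℝ) < 4*c*2)]
          nlinarith
        rw [ht2]
        linarith
      calc Real.exp (-t^2/2) ≤ Real.exp (-(2*Real.log n)) := Real.exp_le_exp.mpr he1
        _ = 1 / (n:ℝ)^2 := by
            rw [Real.exp_neg, show 2*Real.log (n:ℝ) = Real.log n + Real.log n by ring,
              Real.exp_add, Real.exp_log hn', one_div]
            congr 1
            ring
    have hmul : A ≤ (1/2) * (1/(n:ℝ)^2) :=
      mul_le_mul hinv hexp (Real.exp_pos _).le (by norm_num)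
    linarith
  calc μ {ω | ζ < |Real.exp (a * Z ω - c / (2 * n)) - 1|}
      ≤ μ (Z ⁻¹' ({x : ℝ | t < x} ∪ {x : ℝ | x < -t})) := measure_mono hsub
    _ = (Measure.map Z μ) ({x : ℝ | t < x} ∪ {x : ℝ | x < -t}) :=
        (Measure.map_apply_of_aemeasurable hZm hmeas).symm
    _ = gaussianReal 0 1 ({x : ℝ | t < x} ∪ {x : ℝ | x < -t}) := by rw [hZ]
    _ ≤ gaussianReal 0 1 {x : ℝ | t < x} + gaussianReal 0 1 {x : ℝ | x < -t} :=
        measure_union_le _ _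
    _ = gaussianReal 0 1 {x : ℝ | t < x} + gaussianReal 0 1 {x : ℝ | t < x} := by
        rw [gauss_tail_neg]
    _ ≤ ENNReal.ofReal A + ENNReal.ofReal A := add_le_add (gauss_tail ht) (gauss_tail ht)
    _ = ENNReal.ofReal (A + A) := (ENNReal.ofReal_add hApos hApos).symm
    _ ≤ ENNReal.ofReal (1 / n^2) := by
        apply ENNReal.ofReal_le_ofReal
        calc A + A ≤ 1/(n:ℝ)^2 := hfinal
          _ = 1 / ((n:ℝ)^2) := rfl
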